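/- Let ℓ ≥ 1, let a₁,…,a_ℓ be nonnegative reals not all zero, and let n be an integer with n ≥ ℓ + 1. Define the stretch s := (Σ_{j=1}^ℓ a_j)² / (Σ_{j=1}^ℓ a_j²) and the expected separation sep := (Σ_{j=1}^ℓ a_j² · min(j, ℓ+1−j)) / (Σ_{j=1}^ℓ a_j²). Then sep ≥ s / (8 · (1 + ln(2n/s))). -/

import Mathlib

open Finset

lemma harm18 (r : ℕ) (hr : 1 ≤ r) (M : ℕ) (hM : r ≤ M) :
    ∑ k ∈ Finset.Icc (r+1) M, ((k:ℝ))⁻¹ ≤ Real.log M - Real.log r := by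
  induction M, hM using Nat.le_induction with
  | base =>
      rw [Finset.Icc_eq_empty (by omega)]
      simp
  | succ M hM ih =>
      rw [Finset.sum_Icc_succ_top (by omega)]
      have hM0 : (0:ℝ) < M := by exact_mod_cast by omega
      have hM1 : (0:ℝ) < (M:ℝ) + 1 := by linarith
      have key : Real.log M - Real.log (M+1) ≤ -((M:ℝ)+1)⁻¹ := by
        have h := Real.log_le_sub_one_of_pos (x := (M:ℝ)/((M:ℝ)+1)) (by positivity)
        rw [Real.log_div (by positivity) (by positivity)] at h
        have : (M:ℝ)/((M:ℝ)+1) - 1 = -((M:ℝ)+1)⁻¹ := by field_simp; ring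
        linarith [this ▸ h]
      have : Real.log ((M:ℕ)+1 : ℕ) = Real.log ((M:ℝ)+1) := by push_cast; ring_nf
      rw [this]
      push_cast
      push_cast at ih
      linarith

/-- scalar arithmetic for the small-stretch case -/
lemma num18_1 (lM lN L : ℝ) (h1 : lM ≤ lN - Real.log 2) (h2 : lN - 4*Real.log 2 ≤ L)
    (h3 : Real.log 2 ≤ L) : 2*(1+lM) ≤ 8*(1+L) := by
  have h4 : (0:ℝ) < Real.log 2 := Real.log_pos (by norm_num)
  have h5 : Real.log 2 < 0.6931471808 := Real.log_two_lt_d9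
  linarith

/-- scalar arithmetic for the truncated case -/
lemma num18_2 (lM lr lN ls L : ℝ) (h1 : lM ≤ lN - Real.log 2)
    (h2 : ls - 6*Real.log 2 ≤ lr) (h3 : L = Real.log 2 + lN - ls)
    (h4 : Real.log 2 ≤ L) : 2*(lM - lr) ≤ 9/2*(1+L) := by
  have h5 : Real.log 2 < 0.6931471808 := Real.log_two_lt_d9
  linarith

set_option maxHeartbeats 1000000 in
theorem stmt18 (l n : ℕ) (hl : 1 ≤ l) (hn : l + 1 ≤ n)
    (a : Fin l → ℝ) (ha : ∀ j, 0 ≤ a j) (hne : ∃ j, a j ≠ 0) :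
    ((∑ j, a j) ^ 2 / (∑ j, (a j) ^ 2)) /
        (8 * (1 + Real.log ((2 * (n : ℝ)) / ((∑ j, a j) ^ 2 / (∑ j, (a j) ^ 2))))) ≤
      (∑ j, (a j) ^ 2 * min ((j : ℝ) + 1) ((l : ℝ) - (j : ℝ))) /
        (∑ j, (a j) ^ 2) := by
  classical
  obtain ⟨j0, hj0⟩ := hne
  set Q := ∑ j, (a j)^2 with hQdef
  set S := ∑ j, a j with hSdef
  have hQ : 0 < Q := Finset.sum_pos' (fun j _ => sq_nonneg _)
    ⟨j0, Finset.mem_univ _, by positivity⟩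
  have hS : 0 < S := Finset.sum_pos' (fun j _ => ha j)
    ⟨j0, Finset.mem_univ _, lt_of_le_of_ne (ha j0) (Ne.symm hj0)⟩
  -- integer separation function
  set m : Fin l → ℕ := fun j => min (j.val + 1) (l - j.val) with hmdef
  have hm1 : ∀ j, 1 ≤ m j := fun j => by have := j.isLt; simp only [hmdef]; omega
  set M : ℕ := (l+1)/2 with hMdef
  have hmM : ∀ j, m j ≤ M := fun j => by have := j.isLt; simp only [hmdef, hMdef]; omega
  have hM1 : 1 ≤ M := by omega
  have hcast : ∀ j : Fin l, min ((j:ℝ)+1) ((l:ℝ)-(j:ℝ)) = ((m j : ℕ) : ℝ) := by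
    intro j
    have hj := j.isLt
    simp only [hmdef]
    rw [Nat.cast_min, Nat.cast_sub hj.le]
    push_cast
    rfl
  have hTrw : (∑ j, (a j)^2 * min ((j:ℝ)+1) ((l:ℝ)-(j:ℝ))) = ∑ j, (a j)^2 * (m j : ℝ) :=
    Finset.sum_congr rfl fun j _ => by rw [hcast]
  rw [hTrw]
  set T := ∑ j, (a j)^2 * (m j : ℝ) with hTdef
  have hT0 : 0 ≤ T := Finset.sum_nonneg fun j _ => by positivity
  set s := S^2 / Q with hsdef
  set L := Real.log (2 * (n:ℝ) / s) with hLdef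
  have hspos : 0 < s := by positivity
  -- s ≤ l ≤ n
  have hsl : s ≤ l := by
    have h := sq_sum_le_card_mul_sum_sq (s := (univ : Finset (Fin l))) (f := a)
    simp only [Finset.card_univ, Fintype.card_fin] at h
    rw [hsdef, div_le_iff₀ hQ]
    exact_mod_cast h
  have hln : (l:ℝ) ≤ (n:ℝ) := by exact_mod_cast by omega
  have hnpos : (0:ℝ) < n := by exact_mod_cast by omega
  have hL2 : Real.log 2 ≤ L := by
    rw [hLdef]
    apply Real.log_le_log (by norm_num)
    rw [le_div_iff₀ hspos]
    linarith
  have hlog2pos : 0 < Real.log 2 := Real.log_pos (by norm_num)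
  have hD : (0:ℝ) < 8 * (1 + L) := by linarith
  rw [div_le_div_iff₀ hD hQ]
  have hsQ : s * Q = S^2 := div_mul_cancel₀ _ hQ.ne'
  rw [hsQ]
  -- fiber cardinality
  have fib_card : ∀ (A : Finset (Fin l)) (k : ℕ),
      (A.filter (fun j => m j = k)).card ≤ 2 := by
    intro A k
    have hsub0 : (A.filter (fun j => m j = k)) ⊆
        (univ.filter (fun j : Fin l => m j = k)) := by
      intro j hj; simp only [Finset.mem_filter] at *; exact ⟨Finset.mem_univ _, hj.2⟩
    refine (Finset.card_le_card hsub0).trans ?_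
    have hsub : ∀ j ∈ univ.filter (fun j : Fin l => m j = k),
        (j : ℕ) ∈ ({k-1, l-k} : Finset ℕ) := by
      intro j hj
      simp only [Finset.mem_filter, hmdef] at hj
      have := j.isLt
      simp only [Finset.mem_insert, Finset.mem_singleton]
      omega
    have hinj := Finset.card_le_card_of_injOn (fun j : Fin l => (j : ℕ)) hsub
      (fun x _ y _ hxy => Fin.val_injective hxy)
    refine hinj.trans ?_
    exact (Finset.card_insert_le _ _).trans (by simp)
  -- fiberwise sum bound
  have fiber_sum : ∀ (A : Finset (Fin l)) (K : Finset ℕ) (g : ℕ → ℝ),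
      (∀ k ∈ K, 0 ≤ g k) → (∀ j ∈ A, m j ∈ K) →
      ∑ j ∈ A, g (m j) ≤ 2 * ∑ k ∈ K, g k := by
    intro A K g hg hmap
    rw [← Finset.sum_fiberwise_of_maps_to hmap (fun j => g (m j))]
    rw [Finset.mul_sum]
    refine Finset.sum_le_sum fun k hk => ?_
    have he : ∑ j ∈ A.filter (fun j => m j = k), g (m j)
        = (A.filter (fun j => m j = k)).card * g k := by
      rw [Finset.sum_congr rfl (fun j hj => by
        simp only [Finset.mem_filter] at hj; rw [hj.2])]
      simp [Finset.sum_const, nsmul_eq_mul]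
    rw [he]
    have h2 : ((A.filter (fun j => m j = k)).card : ℝ) ≤ 2 := by
      exact_mod_cast fib_card A k
    exact mul_le_mul_of_nonneg_right h2 (hg k hk)
  -- Cauchy-Schwarz on a subset
  have CS : ∀ A : Finset (Fin l),
      (∑ j ∈ A, a j)^2 ≤ (∑ j ∈ A, ((m j : ℝ))⁻¹) * (∑ j ∈ A, (a j)^2 * (m j : ℝ)) := by
    intro A
    have h := Finset.sum_mul_sq_le_sq_mul_sq A (fun j => Real.sqrt ((m j : ℝ))⁻¹)
      (fun j => Real.sqrt (m j : ℝ) * a j)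
    have hmpos : ∀ j : Fin l, (0:ℝ) < (m j : ℝ) := fun j => by
      have := hm1 j; exact_mod_cast by omega
    have e1 : ∀ j : Fin l, Real.sqrt ((m j : ℝ))⁻¹ * (Real.sqrt (m j : ℝ) * a j) = a j := by
      intro j
      rw [Real.sqrt_inv]
      field_simp [Real.sqrt_ne_zero'.mpr (hmpos j)]
    have e2 : ∀ j : Fin l, (Real.sqrt ((m j : ℝ))⁻¹)^2 = ((m j : ℝ))⁻¹ := fun j =>
      Real.sq_sqrt (by positivity)
    have e3 : ∀ j : Fin l, (Real.sqrt (m j : ℝ) * a j)^2 = (a j)^2 * (m j : ℝ) := by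
      intro j
      rw [mul_pow, Real.sq_sqrt (hmpos j).le]; ring
    calc (∑ j ∈ A, a j)^2
        = (∑ j ∈ A, Real.sqrt ((m j : ℝ))⁻¹ * (Real.sqrt (m j : ℝ) * a j))^2 := by
          rw [Finset.sum_congr rfl fun j _ => (e1 j).symm]
      _ ≤ (∑ j ∈ A, (Real.sqrt ((m j : ℝ))⁻¹)^2) * (∑ j ∈ A, (Real.sqrt (m j : ℝ) * a j)^2) := h
      _ = (∑ j ∈ A, ((m j : ℝ))⁻¹) * (∑ j ∈ A, (a j)^2 * (m j : ℝ)) := by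
          rw [Finset.sum_congr rfl fun j _ => e2 j, Finset.sum_congr rfl fun j _ => e3 j]
  -- threshold
  set r : ℕ := ⌊s/32⌋₊ with hrdef
  have hr_le : (r:ℝ) ≤ s/32 := Nat.floor_le (by positivity)
  have hr_lt : s/32 < r + 1 := Nat.lt_floor_add_one _
  have hMpos : (0:ℝ) < M := by exact_mod_cast hM1
  have hMn : (M:ℝ) ≤ (n:ℝ)/2 := by
    have h2M : (2*M : ℝ) ≤ (n:ℝ) := by exact_mod_cast by omega
    linarith
  have hlogM : Real.log M ≤ Real.log n - Real.log 2 := by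
    calc Real.log M ≤ Real.log ((n:ℝ)/2) := Real.log_le_log hMpos hMn
      _ = Real.log n - Real.log 2 := Real.log_div hnpos.ne' two_ne_zero
  have hLrw : L = Real.log 2 + Real.log n - Real.log s := by
    rw [hLdef, Real.log_div (by positivity) hspos.ne',
      Real.log_mul two_ne_zero hnpos.ne']
  by_cases hr0 : r = 0
  · -- CASE 1 : s < 32, use full Cauchy-Schwarz
    have hs32 : s < 32 := by
      rw [hr0] at hr_lt; push_cast at hr_lt; linarith
    have hCS := CS univ
    have hH : (∑ j, ((m j : ℝ))⁻¹) ≤ 2 * (1 + Real.log M) := by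
      have h1 : ∑ j ∈ univ, ((m j : ℝ))⁻¹ ≤ 2 * ∑ k ∈ Finset.Icc 1 M, ((k:ℝ))⁻¹ :=
        fiber_sum univ (Finset.Icc 1 M) (fun k => ((k:ℝ))⁻¹) (fun k _ => by positivity)
          (fun j _ => by simp only [Finset.mem_Icc]; exact ⟨hm1 j, hmM j⟩)
      have h2 : ∑ k ∈ Finset.Icc 1 M, ((k:ℝ))⁻¹ ≤ 1 + Real.log M := by
        have hins : Finset.Icc 1 M = insert 1 (Finset.Icc 2 M) := by
          ext k; simp only [Finset.mem_Icc, Finset.mem_insert]; omega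
        rw [hins, Finset.sum_insert (by simp)]
        have h3 := harm18 1 le_rfl M hM1
        simp only [Nat.cast_one, Real.log_one] at h3 ⊢
        norm_num
        linarith
      linarith
    have hLn : Real.log n - 4*Real.log 2 ≤ L := by
      have h16 : (n:ℝ)/16 ≤ 2*(n:ℝ)/s := by
        rw [div_le_div_iff₀ (by norm_num) hspos]
        have hns := mul_le_mul_of_nonneg_left hs32.le hnpos.le
        linarith
      have hlog16 := Real.log_le_log (by positivity) h16
      rw [Real.log_div hnpos.ne' (by norm_num)] at hlog16
      have h164 : Real.log (16:ℝ) = 4 * Real.log 2 := by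
        rw [show (16:ℝ) = 2^4 by norm_num, Real.log_pow]; push_cast; ring
      rw [hLdef]; linarith
    have hnum : 2 * (1 + Real.log M) ≤ 8 * (1 + L) := num18_1 _ _ _ hlogM hLn hL2
    have hfin : (∑ j, ((m j : ℝ))⁻¹) * (∑ j, (a j)^2 * (m j:ℝ)) ≤ (8*(1+L)) * T :=
      mul_le_mul (hH.trans hnum) le_rfl hT0 (by linarith)
    calc S^2 ≤ (∑ j, ((m j : ℝ))⁻¹) * (∑ j, (a j)^2 * (m j:ℝ)) := hCS
      _ ≤ (8*(1+L)) * T := hfin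
      _ = T * (8*(1+L)) := by ring
  · -- CASE 2 : s ≥ 32, truncate
    have hr1 : 1 ≤ r := Nat.one_le_iff_ne_zero.mpr hr0
    have hr1R : (1:ℝ) ≤ (r:ℝ) := by exact_mod_cast hr1
    set Hd := univ.filter (fun j : Fin l => m j ≤ r) with hHddef
    set Tl := univ.filter (fun j : Fin l => ¬ m j ≤ r) with hTldef
    have hsplit : ∑ j ∈ Hd, a j + ∑ j ∈ Tl, a j = S :=
      Finset.sum_filter_add_sum_filter_not univ _ a
    have hhead0 : 0 ≤ ∑ j ∈ Hd, a j := Finset.sum_nonneg fun j _ => ha j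
    have hcard : ((Hd.card : ℕ) : ℝ) ≤ 2*r := by
      have h1 := fiber_sum Hd (Finset.Icc 1 r) (fun _ => (1:ℝ)) (fun k _ => zero_le_one)
        (fun j hj => by
          simp only [hHddef, Finset.mem_filter] at hj
          simp only [Finset.mem_Icc]
          exact ⟨hm1 j, hj.2⟩)
      simp only [Finset.sum_const, nsmul_eq_mul, mul_one, Nat.card_Icc] at h1
      push_cast at h1
      linarith
    have hheadsq : (∑ j ∈ Hd, a j)^2 ≤ 2*(r:ℝ)*Q := by
      calc (∑ j ∈ Hd, a j)^2 ≤ (Hd.card : ℝ) * ∑ j ∈ Hd, (a j)^2 := by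
            exact_mod_cast sq_sum_le_card_mul_sum_sq (s := Hd) (f := a)
        _ ≤ 2*(r:ℝ)*Q := by
            apply mul_le_mul hcard
              (Finset.sum_le_sum_of_subset_of_nonneg (Finset.filter_subset _ _)
                (fun j _ _ => sq_nonneg _))
              (Finset.sum_nonneg fun j _ => sq_nonneg _) (by linarith)
    have hhead_le : ∑ j ∈ Hd, a j ≤ S/4 := by
      have h2rQ : 2*(r:ℝ)*Q ≤ S^2/16 := by
        have := mul_le_mul_of_nonneg_right hr_le hQ.le
        linarith [hsQ]
      have hx2 : (∑ j ∈ Hd, a j)^2 ≤ (S/4)^2 := by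
        have e : (S/4)^2 = S^2/16 := by ring
        linarith
      exact (pow_le_pow_iff_left₀ hhead0 (by linarith) two_ne_zero).mp hx2
    have htail_ge : 3/4*S ≤ ∑ j ∈ Tl, a j := by linarith
    have hCSt := CS Tl
    have hTt : ∑ j ∈ Tl, (a j)^2*(m j:ℝ) ≤ T := by
      apply Finset.sum_le_sum_of_subset_of_nonneg (Finset.filter_subset _ _)
      intro j _ _; positivity
    have hHt0 : 0 ≤ ∑ j ∈ Tl, ((m j:ℝ))⁻¹ :=
      Finset.sum_nonneg fun j _ => by positivity
    have hmain : (3/4*S)^2 ≤ (∑ j ∈ Tl, ((m j:ℝ))⁻¹) * T := by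
      calc (3/4*S)^2 ≤ (∑ j ∈ Tl, a j)^2 :=
            pow_le_pow_left₀ (by positivity) htail_ge 2
        _ ≤ (∑ j ∈ Tl, ((m j:ℝ))⁻¹) * (∑ j ∈ Tl, (a j)^2*(m j:ℝ)) := hCSt
        _ ≤ (∑ j ∈ Tl, ((m j:ℝ))⁻¹) * T := mul_le_mul_of_nonneg_left hTt hHt0
    have hrM : r ≤ M := by
      have hl2M : (l:ℝ) ≤ 2*(M:ℝ) := by exact_mod_cast by omega
      have h1 : (r:ℝ) ≤ (M:ℝ) := by linarith
      exact_mod_cast h1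
    have hHt : ∑ j ∈ Tl, ((m j:ℝ))⁻¹ ≤ 2*(Real.log M - Real.log r) := by
      have h1 := fiber_sum Tl (Finset.Icc (r+1) M) (fun k => ((k:ℝ))⁻¹)
        (fun k _ => by positivity)
        (fun j hj => by
          simp only [hTldef, Finset.mem_filter] at hj
          simp only [Finset.mem_Icc]
          exact ⟨by omega, hmM j⟩)
      have h2 := harm18 r hr1 M hrM
      linarith
    have hlogr : Real.log s - 6*Real.log 2 ≤ Real.log r := by
      have h64 : s/64 ≤ (r:ℝ) := by linarith
      have hlog64 := Real.log_le_log (by positivity) h64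
      rw [Real.log_div hspos.ne' (by norm_num)] at hlog64
      have h646 : Real.log (64:ℝ) = 6 * Real.log 2 := by
        rw [show (64:ℝ) = 2^6 by norm_num, Real.log_pow]; push_cast; ring
      linarith
    have hnum : 2*(Real.log M - Real.log r) ≤ 9/2*(1+L) :=
      num18_2 _ _ _ _ _ hlogM hlogr hLrw hL2
    have hfinal : (3/4*S)^2 ≤ (9/2*(1+L)) * T :=
      hmain.trans (mul_le_mul_of_nonneg_right (hHt.trans hnum) hT0)
    linarith [hfinal]
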